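/- Suppose Y = c₁X₁ + c₃T with X₂ = aX₁ + ε₂ (ε₂ independent noise with variance σ² > 0). Consider two linear predictors f₁ = c₁X₁ + c₃T and f₂ = c₁'X₁ + c₂'X₂ + c₃T with c₂' ≠ 0 and c₁' + c₂'a = c₁ (so both are unbiased given X₁ on average). Then for any distribution shift of X₁ the expected squared prediction error of f₂ exceeds that of f₁ by c₂'²σ², so f₁ has strictly lower target risk. -/

import Mathlib

open MeasureTheory ProbabilityTheory

/-- With `Y = c₁X₁ + c₃T`, `X₂ = aX₁ + ε₂` (`ε₂` mean-zero noise with variance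
`σ² > 0`, independent of `(X₁, T)`), the predictors `f₁ = c₁X₁ + c₃T` and
`f₂ = c₁'X₁ + c₂'X₂ + c₃T` with `c₂' ≠ 0`, `c₁' + c₂'a = c₁` satisfy, for any distribution
of `X₁` (i.e. any shifted target domain), `E[(Y−f₂)²] = E[(Y−f₁)²] + c₂'²σ²`; hence `f₁`
has strictly lower target risk. -/
theorem stmt5 {Ω : Type*} [MeasurableSpace Ω] (μ : Measure Ω) [IsProbabilityMeasure μ]
    (X₁ T ε₂ : Ω → ℝ) (a c₁ c₃ c₁' c₂' σ2 : ℝ)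
    (hσ : 0 < σ2)
    (hmean : ∫ ω, ε₂ ω ∂μ = 0)
    (hvar : ∫ ω, (ε₂ ω) ^ 2 ∂μ = σ2)
    (hL2 : MemLp ε₂ 2 μ)
    (hindep : IndepFun (fun ω => (X₁ ω, T ω)) ε₂ μ)
    (X₂ Y f₁ f₂ : Ω → ℝ)
    (hX₂ : ∀ ω, X₂ ω = a * X₁ ω + ε₂ ω)
    (hY : ∀ ω, Y ω = c₁ * X₁ ω + c₃ * T ω)
    (hf₁ : ∀ ω, f₁ ω = c₁ * X₁ ω + c₃ * T ω)
    (hf₂ : ∀ ω, f₂ ω = c₁' * X₁ ω + c₂' * X₂ ω + c₃ * T ω)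
    (hc : c₁' + c₂' * a = c₁) (hc₂ : c₂' ≠ 0) :
    (∫ ω, (Y ω - f₂ ω) ^ 2 ∂μ = ∫ ω, (Y ω - f₁ ω) ^ 2 ∂μ + c₂' ^ 2 * σ2) ∧
    (∫ ω, (Y ω - f₁ ω) ^ 2 ∂μ < ∫ ω, (Y ω - f₂ ω) ^ 2 ∂μ) := by
  have h1 : ∫ ω, (Y ω - f₁ ω) ^ 2 ∂μ = 0 := by
    have : ∀ ω, (Y ω - f₁ ω) ^ 2 = 0 := by intro ω; rw [hY, hf₁]; ring
    simp [this]
  have h2 : ∫ ω, (Y ω - f₂ ω) ^ 2 ∂μ = c₂' ^ 2 * σ2 := by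
    have he : ∀ ω, (Y ω - f₂ ω) ^ 2 = c₂' ^ 2 * (ε₂ ω) ^ 2 := by
      intro ω; rw [hY, hf₂, hX₂]
      have : c₁ = c₁' + c₂' * a := hc.symm
      rw [this]; ring
    calc ∫ ω, (Y ω - f₂ ω) ^ 2 ∂μ = ∫ ω, c₂' ^ 2 * (ε₂ ω) ^ 2 ∂μ := by
          exact integral_congr_ae (Filter.Eventually.of_forall he)
      _ = c₂' ^ 2 * ∫ ω, (ε₂ ω) ^ 2 ∂μ := integral_const_mul _ _
      _ = c₂' ^ 2 * σ2 := by rw [hvar]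
  refine ⟨by rw [h1, h2, zero_add], ?_⟩
  rw [h1, h2]
  positivity
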